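/- Let G be a C^r diffeomorphism (r ≥ 3) between open subsets of E = ℝ^{2d+1} that preserves the standard contact form α_0 = dx_0 + x^-·dx^+ − x^+·dx^- and the vector field v_0 = ∂/∂x_0, and suppose G(0) = 0. Write G(x_0, x^+, x^-) = (x_0 + G_0(x^+, x^-), G_+(x^+, x^-), G_-(x^+, x^-)) on a small disk around 0. Then DG_0(0) = 0 and D²G_0(0) = 0, i.e. the first and second derivatives of the function G_0 vanish at the origin. -/

import Mathlib

/- STATEMENT 1: If G is a C^r (r ≥ 3) diffeomorphism between open subsets of
E = ℝ × ℝ^d × ℝ^d preserving the standard contact form α₀ and the vector field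
v₀ = ∂/∂x₀, with G(0) = 0 and the skew-product form
G(x₀,x⁺,x⁻) = (x₀ + G₀(x⁺,x⁻), Gp(x⁺,x⁻), Gm(x⁺,x⁻)) on a small disk around 0,
then DG₀(0) = 0 and D²G₀(0) = 0. -/
open Topology Filter ContinuousLinearMap

set_option maxHeartbeats 1000000

theorem stmt1 (d r : ℕ) (hr : 3 ≤ r)
    (α₀ : (ℝ × (Fin d → ℝ) × (Fin d → ℝ)) → (ℝ × (Fin d → ℝ) × (Fin d → ℝ)) → ℝ)
    (hα₀ : ∀ z v, α₀ z v =
      v.1 + (∑ i, z.2.2 i * v.2.1 i) - ∑ i, z.2.1 i * v.2.2 i)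
    (V' : Set (ℝ × (Fin d → ℝ) × (Fin d → ℝ))) (hV' : IsOpen V')
    (G : (ℝ × (Fin d → ℝ) × (Fin d → ℝ)) → (ℝ × (Fin d → ℝ) × (Fin d → ℝ)))
    (hGdiff : ContDiffOn ℝ r G V') (hGinj : Set.InjOn G V')
    (hcontact : ∀ x ∈ V', ∀ v, α₀ (G x) (fderiv ℝ G x v) = α₀ x v)
    (hv₀ : ∀ x ∈ V', fderiv ℝ G x (1, 0, 0) = (1, 0, 0))
    (h0V : (0 : ℝ × (Fin d → ℝ) × (Fin d → ℝ)) ∈ V')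
    (hG0 : G 0 = 0)
    (D : Set (ℝ × (Fin d → ℝ) × (Fin d → ℝ))) (hD : IsOpen D)
    (h0D : (0 : ℝ × (Fin d → ℝ) × (Fin d → ℝ)) ∈ D) (hDV : D ⊆ V')
    (G₀ : ((Fin d → ℝ) × (Fin d → ℝ)) → ℝ)
    (Gp Gm : ((Fin d → ℝ) × (Fin d → ℝ)) → (Fin d → ℝ))
    (hform : ∀ x ∈ D, G x = (x.1 + G₀ x.2, Gp x.2, Gm x.2)) :
    fderiv ℝ G₀ (0 : (Fin d → ℝ) × (Fin d → ℝ)) = 0 ∧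
    fderiv ℝ (fun w => fderiv ℝ G₀ w) (0 : (Fin d → ℝ) × (Fin d → ℝ)) = 0 := by
  classical
  have hr3 : (3 : WithTop ℕ∞) ≤ (r : WithTop ℕ∞) := by exact_mod_cast hr
  have hr1 : (1 : WithTop ℕ∞) ≤ (r : WithTop ℕ∞) := le_trans (by norm_num) hr3
  have hr2 : (1 + 1 : WithTop ℕ∞) ≤ (r : WithTop ℕ∞) := le_trans (by norm_num) hr3
  set g : ((Fin d → ℝ) × (Fin d → ℝ)) → (ℝ × (Fin d → ℝ) × (Fin d → ℝ)) :=
    fun w => G (0, w) with hgdef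
  set f : ((Fin d → ℝ) × (Fin d → ℝ)) → _ := fun w => fderiv ℝ g w with hfdef
  have hVnhds : ∀ᶠ w in 𝓝 (0 : (Fin d → ℝ) × (Fin d → ℝ)), ((0:ℝ), w) ∈ V' := by
    have hc : Continuous fun w : (Fin d → ℝ) × (Fin d → ℝ) => ((0:ℝ), w) :=
      continuous_const.prodMk continuous_id
    exact hc.continuousAt.preimage_mem_nhds (hV'.mem_nhds (by simpa [Prod.mk_zero_zero] using h0V))
  have hDnhds : ∀ᶠ w in 𝓝 (0 : (Fin d → ℝ) × (Fin d → ℝ)), ((0:ℝ), w) ∈ D := by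
    have hc : Continuous fun w : (Fin d → ℝ) × (Fin d → ℝ) => ((0:ℝ), w) :=
      continuous_const.prodMk continuous_id
    exact hc.continuousAt.preimage_mem_nhds (hD.mem_nhds (by simpa [Prod.mk_zero_zero] using h0D))
  have hfval : ∀ w, ((0:ℝ), w) ∈ V' →
      HasFDerivAt g ((fderiv ℝ G ((0:ℝ), w)).comp
        (ContinuousLinearMap.inr ℝ ℝ ((Fin d → ℝ) × (Fin d → ℝ)))) w := by
    intro w hw
    have hG : HasFDerivAt G (fderiv ℝ G ((0:ℝ), w)) ((0:ℝ), w) :=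
      ((hGdiff.differentiableOn (lt_of_lt_of_le zero_lt_one hr1).ne').differentiableAt (hV'.mem_nhds hw)).hasFDerivAt
    exact hG.comp w (hasFDerivAt_prodMk_right (0:ℝ) w)
  have hgd : ∀ᶠ w in 𝓝 (0 : (Fin d → ℝ) × (Fin d → ℝ)), HasFDerivAt g (f w) w := by
    filter_upwards [hVnhds] with w hw
    exact (hfval w hw).differentiableAt.hasFDerivAt
  have hg0 : g 0 = 0 := by
    show G ((0:ℝ), (0 : (Fin d → ℝ) × (Fin d → ℝ))) = 0
    simpa [Prod.mk_zero_zero] using hG0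
  -- the contact identity, in terms of g and f
  have key : ∀ w, ((0:ℝ), w) ∈ D → ∀ v : (Fin d → ℝ) × (Fin d → ℝ),
      (f w v).1 + (∑ i, (g w).2.2 i * (f w v).2.1 i) - (∑ i, (g w).2.1 i * (f w v).2.2 i)
        = (∑ i, w.2 i * v.1 i) - ∑ i, w.1 i * v.2 i := by
    intro w hw v
    have hwV : ((0:ℝ), w) ∈ V' := hDV hw
    have h := hcontact _ hwV ((0:ℝ), v)
    rw [hα₀, hα₀] at h
    have hfw : f w v = fderiv ℝ G ((0:ℝ), w) ((0:ℝ), v) := by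
      rw [hfdef]; simp only []
      rw [(hfval w hwV).fderiv]
      rfl
    rw [← hfw] at h
    simpa using h
  -- Part 1
  have part1 : ∀ v, (f 0 v).1 = 0 := by
    intro v
    have h := key 0 (by simpa [Prod.mk_zero_zero] using h0D) v
    simpa [hg0] using h
  -- second derivative setup
  have hg0' : HasFDerivAt g (f 0) 0 := hgd.self_of_nhds
  have hgC : ContDiffAt ℝ r g 0 := by
    have h1 : ContDiffAt ℝ r G ((0:ℝ), (0 : (Fin d → ℝ) × (Fin d → ℝ))) :=
      hGdiff.contDiffAt (hV'.mem_nhds (by simpa [Prod.mk_zero_zero] using h0V))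
    exact h1.comp 0 ((contDiff_const.prodMk contDiff_id).contDiffAt)
  have hfC : ContDiffAt ℝ 1 f 0 := hgC.fderiv_right hr2
  set B := fderiv ℝ f 0 with hBdef
  have hBd : HasFDerivAt f B 0 := (hfC.differentiableAt one_ne_zero).hasFDerivAt
  have hsymm : ∀ u v, B u v = B v u := fun u v =>
    second_derivative_symmetric_of_eventually hgd hBd u v
  -- projections
  set π1 : (ℝ × (Fin d → ℝ) × (Fin d → ℝ)) →L[ℝ] ℝ := ContinuousLinearMap.fst ℝ ℝ _ with hπ1
  set πp : Fin d → (ℝ × (Fin d → ℝ) × (Fin d → ℝ)) →L[ℝ] ℝ := fun i =>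
    (ContinuousLinearMap.proj i).comp
      ((ContinuousLinearMap.fst ℝ (Fin d → ℝ) (Fin d → ℝ)).comp
        (ContinuousLinearMap.snd ℝ ℝ _)) with hπp
  set πm : Fin d → (ℝ × (Fin d → ℝ) × (Fin d → ℝ)) →L[ℝ] ℝ := fun i =>
    (ContinuousLinearMap.proj i).comp
      ((ContinuousLinearMap.snd ℝ (Fin d → ℝ) (Fin d → ℝ)).comp
        (ContinuousLinearMap.snd ℝ ℝ _)) with hπm
  -- main: differentiated contact identity
  have main : ∀ u v : (Fin d → ℝ) × (Fin d → ℝ), (B u v).1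
      + (∑ i, (f 0 v).2.1 i * (f 0 u).2.2 i) - (∑ i, (f 0 v).2.2 i * (f 0 u).2.1 i)
      = (∑ i, v.1 i * u.2 i) - ∑ i, v.2 i * u.1 i := by
    intro u v
    set ev : ((Fin d → ℝ) × (Fin d → ℝ) →L[ℝ] (ℝ × (Fin d → ℝ) × (Fin d → ℝ)))
        →L[ℝ] (ℝ × (Fin d → ℝ) × (Fin d → ℝ)) := ContinuousLinearMap.apply ℝ _ v with hev
    have h1 : HasFDerivAt (fun w => (f w v).1) ((π1.comp ev).comp B) 0 :=
      (π1.comp ev).hasFDerivAt.comp 0 hBd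
    have h2 : ∀ i : Fin d, HasFDerivAt (fun w => (g w).2.2 i * (f w v).2.1 i)
        ((g 0).2.2 i • (((πp i).comp ev).comp B) + (f 0 v).2.1 i • ((πm i).comp (f 0))) 0 :=
      fun i => ((πm i).hasFDerivAt.comp 0 hg0').mul
        (((πp i).comp ev).hasFDerivAt.comp 0 hBd)
    have h3 : ∀ i : Fin d, HasFDerivAt (fun w => (g w).2.1 i * (f w v).2.2 i)
        ((g 0).2.1 i • (((πm i).comp ev).comp B) + (f 0 v).2.2 i • ((πp i).comp (f 0))) 0 :=
      fun i => ((πp i).hasFDerivAt.comp 0 hg0').mul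
        (((πm i).comp ev).hasFDerivAt.comp 0 hBd)
    have hL : HasFDerivAt
        (fun w => (f w v).1 + (∑ i, (g w).2.2 i * (f w v).2.1 i)
          - (∑ i, (g w).2.1 i * (f w v).2.2 i))
        ((π1.comp ev).comp B
          + (∑ i, ((g 0).2.2 i • (((πp i).comp ev).comp B) + (f 0 v).2.1 i • ((πm i).comp (f 0))))
          - (∑ i, ((g 0).2.1 i • (((πm i).comp ev).comp B) + (f 0 v).2.2 i • ((πp i).comp (f 0))))) 0 :=
      (h1.add (HasFDerivAt.fun_sum fun i _ => h2 i)).sub (HasFDerivAt.fun_sum fun i _ => h3 i)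
    have hR : HasFDerivAt
        (fun w : (Fin d → ℝ) × (Fin d → ℝ) => (∑ i, w.2 i * v.1 i) - ∑ i, w.1 i * v.2 i)
        ((∑ i, v.1 i • ((ContinuousLinearMap.proj i).comp
            (ContinuousLinearMap.snd ℝ (Fin d → ℝ) (Fin d → ℝ))))
          - (∑ i, v.2 i • ((ContinuousLinearMap.proj i).comp
            (ContinuousLinearMap.fst ℝ (Fin d → ℝ) (Fin d → ℝ))))) 0 := by
      refine HasFDerivAt.sub (HasFDerivAt.fun_sum fun i _ => ?_) (HasFDerivAt.fun_sum fun i _ => ?_)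
      · exact ((ContinuousLinearMap.proj i).comp
          (ContinuousLinearMap.snd ℝ (Fin d → ℝ) (Fin d → ℝ))).hasFDerivAt.mul_const (v.1 i)
      · exact ((ContinuousLinearMap.proj i).comp
          (ContinuousLinearMap.fst ℝ (Fin d → ℝ) (Fin d → ℝ))).hasFDerivAt.mul_const (v.2 i)
    have heqf : (fun w => (f w v).1 + (∑ i, (g w).2.2 i * (f w v).2.1 i)
          - (∑ i, (g w).2.1 i * (f w v).2.2 i))
        =ᶠ[𝓝 (0 : (Fin d → ℝ) × (Fin d → ℝ))]
        (fun w : (Fin d → ℝ) × (Fin d → ℝ) => (∑ i, w.2 i * v.1 i) - ∑ i, w.1 i * v.2 i) := by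
      filter_upwards [hDnhds] with w hw
      exact key w hw v
    have hder := (hL.congr_of_eventuallyEq heqf.symm).unique hR
    have happ := DFunLike.congr_fun hder u
    simpa [hg0, hπ1, hπp, hπm, hev] using happ
  -- flip & symmetrize: (B u v).1 = 0
  have hB1 : ∀ u v, (B u v).1 = 0 := by
    intro u v
    have h1 := main u v
    have h2 := main v u
    have hs : (B u v).1 = (B v u).1 := congrArg Prod.fst (hsymm u v)
    have a1 : (∑ i, (f 0 u).2.1 i * (f 0 v).2.2 i) = ∑ i, (f 0 v).2.2 i * (f 0 u).2.1 i :=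
      Finset.sum_congr rfl fun i _ => mul_comm _ _
    have a2 : (∑ i, (f 0 u).2.2 i * (f 0 v).2.1 i) = ∑ i, (f 0 v).2.1 i * (f 0 u).2.2 i :=
      Finset.sum_congr rfl fun i _ => mul_comm _ _
    have a3 : (∑ i, u.1 i * v.2 i) = ∑ i, v.2 i * u.1 i :=
      Finset.sum_congr rfl fun i _ => mul_comm _ _
    have a4 : (∑ i, u.2 i * v.1 i) = ∑ i, v.1 i * u.2 i :=
      Finset.sum_congr rfl fun i _ => mul_comm _ _
    rw [a1, a2, a3, a4, ← hs] at h2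
    linarith [h1, h2]
  -- relate G₀ to g
  have hgeq : (fun w => (g w).1) =ᶠ[𝓝 (0 : (Fin d → ℝ) × (Fin d → ℝ))] G₀ := by
    filter_upwards [hDnhds] with w hw
    show (G ((0:ℝ), w)).1 = G₀ w
    rw [hform _ hw]
    simp
  constructor
  · have e1 : fderiv ℝ G₀ (0 : (Fin d → ℝ) × (Fin d → ℝ))
        = fderiv ℝ (fun w => (g w).1) 0 := (hgeq.fderiv_eq).symm
    rw [e1, hg0'.fst.fderiv]
    refine ContinuousLinearMap.ext fun v => ?_
    simpa using part1 v
  · have e1 : fderiv ℝ G₀ =ᶠ[𝓝 (0 : (Fin d → ℝ) × (Fin d → ℝ))]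
        fderiv ℝ (fun w => (g w).1) := hgeq.symm.fderiv
    set Cπ : (((Fin d → ℝ) × (Fin d → ℝ)) →L[ℝ] (ℝ × (Fin d → ℝ) × (Fin d → ℝ)))
        →L[ℝ] (((Fin d → ℝ) × (Fin d → ℝ)) →L[ℝ] ℝ) :=
      ContinuousLinearMap.compL ℝ ((Fin d → ℝ) × (Fin d → ℝ))
        (ℝ × (Fin d → ℝ) × (Fin d → ℝ)) ℝ π1 with hCπ
    have e2 : fderiv ℝ (fun w => (g w).1) =ᶠ[𝓝 (0 : (Fin d → ℝ) × (Fin d → ℝ))]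
        (fun w => Cπ (f w)) := by
      filter_upwards [hgd] with w hw
      rw [hCπ, ContinuousLinearMap.compL_apply]
      exact hw.fst.fderiv
    have e3 : (fun w => fderiv ℝ G₀ w) =ᶠ[𝓝 (0 : (Fin d → ℝ) × (Fin d → ℝ))]
        (fun w => Cπ (f w)) := e1.trans e2
    rw [e3.fderiv_eq]
    have hc : HasFDerivAt (fun w => Cπ (f w)) (Cπ.comp B) 0 :=
      Cπ.hasFDerivAt.comp 0 hBd
    rw [hc.fderiv]
    refine ContinuousLinearMap.ext fun u => ?_
    refine ContinuousLinearMap.ext fun w => ?_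
    simpa [hCπ, hπ1] using hB1 u w
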